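/- Let G be a finite connected multigraph, Π a partition of V into connected parts π₁,…,π_{k+1} with quotient simple graph G̃_Π, and f the map from orientations of G̃_Π to divisors of G given by (f(o))_v = Σ over oriented quotient edges (π_i → π_j) with v ∈ π_j of the number of G-edges at v between π_i and π_j. If o₂ is obtained from o₁ by a switch at a critical set A ⊆ V(G̃_Π) where all edges between A and its complement point toward A in o₁, then f(o₂) = f(o₁) - L·χ_{Ā}, where Ā = ⋃_{π∈A} π ⊆ V and L is the Laplacian of G. In particular f(o₁) ∼ f(o₂). -/

import Mathlib

open Finset
open scoped Classical

/-- Laplacian of a loopless multigraph given by edge multiplicities `m`. -/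
def lap {V : Type*} [Fintype V] [DecidableEq V] (m : V → V → ℕ) : Matrix V V ℤ :=
  fun u v => if u = v then (∑ w, (m u w : ℤ)) else -(m u v : ℤ)

/-- The divisor on `G` associated to an orientation `o` of the quotient graph
of the partition with part map `p`. -/
noncomputable def fdiv {V ι : Type*} [Fintype V] [DecidableEq V] [Fintype ι] [DecidableEq ι]
    (m : V → V → ℕ) (p : V → ι) (o : ι → ι → Prop) : V → ℤ :=
  fun v => ∑ i : ι, if o i (p v) then (∑ u ∈ Finset.univ.filter (fun u => p u = i), (m v u : ℤ)) else 0

/-- Adjacency-generating relation of the quotient simple graph. -/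
def qrel {V ι : Type*} (m : V → V → ℕ) (p : V → ι) : ι → ι → Prop :=
  fun i j => ∃ u v, p u = i ∧ p v = j ∧ 0 < m u v

theorem stmt14 {V ι : Type*} [Fintype V] [DecidableEq V] [Fintype ι] [DecidableEq ι]
    (m : V → V → ℕ) (hsymm : ∀ u v, m u v = m v u) (hloop : ∀ v, m v v = 0)
    (hconn : (SimpleGraph.fromRel (fun u v => 0 < m u v)).Connected)
    (p : V → ι) (hsurj : Function.Surjective p)
    (hpconn : ∀ i : ι, ((SimpleGraph.fromRel (fun u v => 0 < m u v)).induce {v : V | p v = i}).Connected)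
    (o₁ o₂ : ι → ι → Prop)
    (hsub₁ : ∀ i j, o₁ i j → (SimpleGraph.fromRel (qrel m p)).Adj i j)
    (htotal₁ : ∀ i j, (SimpleGraph.fromRel (qrel m p)).Adj i j → o₁ i j ∨ o₁ j i)
    (hanti₁ : ∀ i j, o₁ i j → ¬ o₁ j i)
    (hacyc₁ : ∀ i, ¬ Relation.TransGen o₁ i i)
    -- A is critical for o₁ and all crossing edges point toward A
    (A : Set ι)
    (hcrit : ∀ i j, o₁ i j → i ∈ A → j ∈ A)
    -- o₂ is the switch of o₁ at A
    (ho₂ : ∀ i j, o₂ i j ↔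
      ((((i ∈ A) ↔ (j ∈ A)) ∧ o₁ i j) ∨ (¬((i ∈ A) ↔ (j ∈ A)) ∧ o₁ j i))) :
    fdiv m p o₂ =
      fdiv m p o₁ - (lap m).mulVec (fun v => if p v ∈ A then 1 else 0) ∧
    (∃ σ : V → ℤ, fdiv m p o₁ - (lap m).mulVec σ = fdiv m p o₂) := by
  classical
  have hadj : ∀ v u, 0 < m v u → p u ≠ p v → o₁ (p u) (p v) ∨ o₁ (p v) (p u) := by
    intro v u hm hne
    refine htotal₁ _ _ ⟨hne, Or.inl ⟨u, v, rfl, rfl, ?_⟩⟩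
    rwa [hsymm]
  have key : fdiv m p o₂ =
      fdiv m p o₁ - (lap m).mulVec (fun v => if p v ∈ A then 1 else 0) := by
    funext v
    set χ : ι → ℤ := fun i => if i ∈ A then 1 else 0 with hχ
    set S : ι → ℤ := fun i => ∑ u ∈ Finset.univ.filter (fun u => p u = i), (m v u : ℤ)
      with hS
    -- vanishing of S when no edge orientation between parts
    have hS0 : ∀ i, i ≠ p v → ¬ o₁ i (p v) → ¬ o₁ (p v) i → S i = 0 := by
      intro i hne h1 h2
      apply Finset.sum_eq_zero
      intro u hu
      simp only [Finset.mem_filter] at hu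
      by_contra h
      have hm : 0 < m v u := Nat.pos_of_ne_zero (by exact_mod_cast fun hh => h (by simp [hh]))
      have := hadj v u hm (by rw [hu.2]; exact hne)
      rw [hu.2] at this
      tauto
    -- compute the Laplacian term
    have hlap : (lap m).mulVec (fun u => χ (p u)) v = ∑ i : ι, S i * (χ (p v) - χ i) := by
      have h1 : (lap m).mulVec (fun u => χ (p u)) v = ∑ u : V, lap m v u * χ (p u) := by
        simp [Matrix.mulVec, dotProduct]
      have h2 : ∀ u : V, lap m v u * χ (p u) =
          (if v = u then (∑ w, (m v w : ℤ)) else 0) * χ (p u) - (m v u : ℤ) * χ (p u) := by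
        intro u
        by_cases h : v = u
        · subst h; simp [lap, hloop v]
        · simp [lap, h]
      rw [h1]
      simp only [h2]
      rw [Finset.sum_sub_distrib]
      simp only [ite_mul, zero_mul]
      rw [Finset.sum_ite_eq Finset.univ v (fun u => (∑ w, (m v w : ℤ)) * χ (p u))]
      have h3 : (∑ u : V, (m v u : ℤ) * χ (p u)) = ∑ i : ι, S i * χ i := by
        rw [← Finset.sum_fiberwise (g := p) (f := fun u => (m v u : ℤ) * χ (p u))]
        refine Finset.sum_congr rfl fun i _ => ?_
        rw [hS, Finset.sum_mul]
        refine Finset.sum_congr rfl fun u hu => ?_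
        simp only [Finset.mem_filter] at hu
        rw [hu.2]
      have h4 : (∑ w : V, (m v w : ℤ)) = ∑ i : ι, S i := by
        rw [hS, ← Finset.sum_fiberwise (g := p) (f := fun u => (m v u : ℤ))]
      simp only [Finset.mem_univ, if_true, h3, h4, Finset.sum_mul, mul_sub,
        Finset.sum_sub_distrib]
    have hmain : fdiv m p o₂ v = fdiv m p o₁ v + ∑ i : ι, S i * (χ i - χ (p v)) := by
      simp only [fdiv, ← hS]
      rw [← Finset.sum_add_distrib]
      refine Finset.sum_congr rfl fun i _ => ?_
      by_cases hiv : i = p v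
      · have h1 : ¬ o₁ i (p v) := by rw [hiv]; exact fun h => hanti₁ _ _ h h
        have h2 : ¬ o₂ i (p v) := by
          rw [ho₂, hiv]
          intro h
          rcases h with ⟨-, h⟩ | ⟨h, -⟩
          · exact hanti₁ _ _ h h
          · exact h Iff.rfl
        rw [if_neg h2, if_neg h1]
        simp [hiv]
      by_cases hv : p v ∈ A <;> by_cases hi : i ∈ A
      · -- both in A
        have h2 : o₂ i (p v) ↔ o₁ i (p v) := by rw [ho₂]; tauto
        simp [h2, hχ, hv, hi]
      · -- p v ∈ A, i ∉ A : crossing edge points toward A in o₁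
        have hno : ¬ o₁ (p v) i := fun h => hi (hcrit _ _ h hv)
        have h2 : ¬ o₂ i (p v) := by rw [ho₂]; tauto
        by_cases ho : o₁ i (p v)
        · simp [h2, ho, hχ, hv, hi, hS]
        · have := hS0 i hiv ho hno
          simp [h2, ho, hχ, hv, hi, this]
      · -- p v ∉ A, i ∈ A
        have hno : ¬ o₁ i (p v) := fun h => hv (hcrit _ _ h hi)
        have h2 : o₂ i (p v) ↔ o₁ (p v) i := by rw [ho₂]; tauto
        by_cases ho : o₁ (p v) i
        · simp [h2, ho, hno, hχ, hv, hi, hS]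
        · have := hS0 i hiv hno ho
          simp [h2, ho, hno, hχ, hv, hi, this]
      · -- both outside A
        have h2 : o₂ i (p v) ↔ o₁ i (p v) := by rw [ho₂]; tauto
        simp [h2, hχ, hv, hi]
    have : fdiv m p o₂ v = fdiv m p o₁ v - (lap m).mulVec (fun u => χ (p u)) v := by
      rw [hmain, hlap]
      have : ∑ i : ι, S i * (χ i - χ (p v)) = - ∑ i : ι, S i * (χ (p v) - χ i) := by
        rw [← Finset.sum_neg_distrib]
        exact Finset.sum_congr rfl fun i _ => by ring
      rw [this]; ring
    simpa [hχ] using this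
  exact ⟨key, ⟨fun v => if p v ∈ A then 1 else 0, by rw [key]⟩⟩
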